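/- arXiv:1412.1604 — 2 statements merged into one kernel-verified Lean document; each statement's English description precedes it below -/
import Mathlib

section
/- For every nonnegative integer l, the power series identity ∑_{j≥0} (x^j / (j! 2^j)) · ((2j+2l+1)!!/(2j+1)!!) = (∑_{j=0}^{l} (2l+1)!/((2l+1-2j)! j! 2^j) · x^{l-j}) · e^{x/2} holds. -/
open Finset Nat

noncomputable def Bcoef (l m : ℕ) : ℝ :=
  ((2*l+1).factorial : ℝ) / (((2*m+1).factorial : ℝ) * ((l-m).factorial : ℝ) * 2^(l-m))

lemma descFactorial_cast_succ (j m : ℕ) :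
    (j.descFactorial (m+1) : ℝ) = ((j:ℝ) - m) * (j.descFactorial m : ℝ) := by
  rcases le_or_gt m j with h | h
  · rw [Nat.descFactorial_succ]
    push_cast [Nat.cast_sub h]
    ring
  · rw [Nat.descFactorial_eq_zero_iff_lt.2 h,
      Nat.descFactorial_eq_zero_iff_lt.2 (h.trans_le (Nat.le_succ m))]
    simp

lemma Bcoef_zero (l : ℕ) : Bcoef (l+1) 0 = (2*l+3) * Bcoef l 0 := by
  unfold Bcoef
  have h1 : 2*(l+1)+1 = (2*l+1) + 2 := by ring
  rw [h1]
  simp only [Nat.sub_zero, Nat.factorial_succ, Nat.factorial]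
  push_cast
  have : ((2*l+1).factorial : ℝ) ≠ 0 := Nat.cast_ne_zero.2 (Nat.factorial_ne_zero _)
  have hl : (l.factorial : ℝ) ≠ 0 := Nat.cast_ne_zero.2 (Nat.factorial_ne_zero _)
  field_simp
  ring

lemma Bcoef_diag (l : ℕ) : Bcoef (l+1) (l+1) = Bcoef l l := by
  unfold Bcoef
  simp [Nat.sub_self, div_self (Nat.cast_ne_zero.2 (Nat.factorial_ne_zero _) : ((2*_+1).factorial:ℝ) ≠ 0)]

lemma Bcoef_mid (l m : ℕ) (h : m < l) :
    Bcoef (l+1) (m+1) = Bcoef l m + (2*m+2*l+5) * Bcoef l (m+1) := by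
  obtain ⟨k, rfl⟩ : ∃ k, l = m+1+k := ⟨l-(m+1), by omega⟩
  unfold Bcoef
  have e1 : 2*(m+1+k+1)+1 = (2*(m+1+k)+1) + 2 := by ring
  have e2 : 2*(m+1)+1 = (2*m+1) + 2 := by ring
  have e3 : m+1+k+1 - (m+1) = k+1 := by omega
  have e4 : m+1+k - m = k+1 := by omega
  have e5 : m+1+k - (m+1) = k := by omega
  rw [e1, e2, e3, e4, e5]
  simp only [Nat.factorial_succ]
  push_cast
  have h1 : ((2*(m+1+k)+1).factorial : ℝ) ≠ 0 := Nat.cast_ne_zero.2 (Nat.factorial_ne_zero _)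
  have h2 : ((2*m+1).factorial : ℝ) ≠ 0 := Nat.cast_ne_zero.2 (Nat.factorial_ne_zero _)
  have h3 : (k.factorial : ℝ) ≠ 0 := Nat.cast_ne_zero.2 (Nat.factorial_ne_zero _)
  field_simp
  ring

lemma key (l j : ℕ) :
    ((2*j+2*l+1)‼ : ℝ) / ((2*j+1)‼ : ℝ)
      = ∑ m ∈ range (l+1), Bcoef l m * 2^m * (j.descFactorial m : ℝ) := by
  induction l with
  | zero =>
      simp [Bcoef, div_self (Nat.cast_ne_zero.2 (Nat.doubleFactorial_pos _).ne' : ((2*j+1)‼:ℝ) ≠ 0)]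
  | succ l ih =>
      have h1 : 2*j+2*(l+1)+1 = (2*j+2*l+1) + 2 := by ring
      rw [h1, Nat.doubleFactorial_add_two]
      push_cast
      rw [mul_div_assoc, ih]
      have expand : ∀ m : ℕ,
          (2*(j:ℝ)+2*l+1+2) * (Bcoef l m * 2^m * (j.descFactorial m : ℝ))
            = Bcoef l m * 2^(m+1) * (j.descFactorial (m+1) : ℝ)
              + (2*m+2*l+3) * (Bcoef l m * 2^m * (j.descFactorial m : ℝ)) := by
        intro m
        rw [descFactorial_cast_succ]
        ring
      rw [mul_sum]
      rw [Finset.sum_congr rfl fun m _ => expand m, Finset.sum_add_distrib]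
      rw [Finset.sum_range_succ' (fun m => Bcoef (l+1) m * 2^m * (j.descFactorial m : ℝ)) (l+1)]
      rw [Finset.sum_range_succ' (fun m => ((2*(m:ℝ)+2*l+3)) * (Bcoef l m * 2^m * (j.descFactorial m : ℝ))) l]
      rw [Finset.sum_range_succ (fun m => Bcoef l m * 2^(m+1) * (j.descFactorial (m+1) : ℝ)) l]
      rw [Finset.sum_range_succ (fun m => Bcoef (l+1) (m+1) * 2^(m+1) * (j.descFactorial (m+1) : ℝ)) l]
      simp only [Nat.descFactorial_zero, Nat.cast_one, pow_zero]
      have hsum : ∀ m ∈ range l,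
          Bcoef l m * 2^(m+1) * (j.descFactorial (m+1) : ℝ)
            + (2*((m+1:ℕ):ℝ)+2*l+3) * (Bcoef l (m+1) * 2^(m+1) * (j.descFactorial (m+1) : ℝ))
          = Bcoef (l+1) (m+1) * 2^(m+1) * (j.descFactorial (m+1) : ℝ) := by
        intro m hm
        rw [Bcoef_mid l m (mem_range.1 hm)]
        push_cast
        ring
      have h2 := Finset.sum_congr rfl hsum
      rw [Finset.sum_add_distrib] at h2
      rw [Bcoef_diag, Bcoef_zero]
      push_cast at h2 ⊢
      linarith [h2]

lemma shift_eq (m : ℕ) (x : ℝ) (j : ℕ) :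
    x^(j+m) * ((j+m).descFactorial m : ℝ) / (((j+m).factorial : ℝ) * 2^(j+m))
      = (x/2)^m * ((x/2)^j / (j.factorial : ℝ)) := by
  have hd : (j.factorial : ℝ) * ((j+m).descFactorial m : ℝ) = ((j+m).factorial : ℝ) := by
    rw [← Nat.cast_mul]
    congr 1
    have := Nat.factorial_mul_descFactorial (Nat.le_add_left m j)
    rwa [Nat.add_sub_cancel] at this
  have hdpos : ((j+m).descFactorial m : ℝ) ≠ 0 := by
    rw [Nat.cast_ne_zero]
    simp only [ne_eq, Nat.descFactorial_eq_zero_iff_lt]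
    omega
  rw [← hd]
  have hj : (j.factorial : ℝ) ≠ 0 := Nat.cast_ne_zero.2 (Nat.factorial_ne_zero _)
  field_simp
  rw [pow_add, pow_add, div_pow, div_pow]
  field_simp

lemma summable_aux (m : ℕ) (x : ℝ) :
    Summable (fun j : ℕ => x^j * (j.descFactorial m : ℝ) / ((j.factorial : ℝ) * 2^j)) := by
  rw [← summable_nat_add_iff m]
  simp only [shift_eq]
  exact (Real.summable_pow_div_factorial (x/2)).mul_left _

lemma tsum_aux (m : ℕ) (x : ℝ) :
    ∑' j : ℕ, x^j * (j.descFactorial m : ℝ) / ((j.factorial : ℝ) * 2^j)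
      = (x/2)^m * Real.exp (x/2) := by
  rw [← Summable.sum_add_tsum_nat_add m (summable_aux m x)]
  have h0 : ∑ j ∈ range m, x^j * (j.descFactorial m : ℝ) / ((j.factorial : ℝ) * 2^j) = 0 := by
    apply Finset.sum_eq_zero
    intro j hj
    rw [Nat.descFactorial_eq_zero_iff_lt.2 (mem_range.1 hj)]
    simp
  rw [h0, zero_add]
  simp only [shift_eq]
  rw [tsum_mul_left]
  congr 1
  rw [Real.exp_eq_exp_ℝ, NormedSpace.exp_eq_tsum_div]

/-- For every `l : ℕ`,
`∑_{j≥0} (x^j/(j! 2^j)) · ((2j+2l+1)‼/(2j+1)‼)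
  = (∑_{j=0}^{l} (2l+1)!/((2l+1-2j)! j! 2^j) x^{l-j}) · e^{x/2}`. -/
theorem doubleFactorial_ratio_series_odd (l : ℕ) (x : ℝ) :
    ∑' j : ℕ, x ^ j / ((j.factorial : ℝ) * 2 ^ j) *
        ((Nat.doubleFactorial (2 * j + 2 * l + 1) : ℝ) /
          (Nat.doubleFactorial (2 * j + 1) : ℝ))
      = (∑ j ∈ Finset.range (l + 1),
          ((2 * l + 1).factorial : ℝ) /
            (((2 * l + 1 - 2 * j).factorial : ℝ) * (j.factorial : ℝ) * 2 ^ j) *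
            x ^ (l - j)) * Real.exp (x / 2) := by
  have hterm : ∀ j : ℕ,
      x ^ j / ((j.factorial : ℝ) * 2 ^ j) *
        ((Nat.doubleFactorial (2 * j + 2 * l + 1) : ℝ) /
          (Nat.doubleFactorial (2 * j + 1) : ℝ))
      = ∑ m ∈ range (l+1),
          (Bcoef l m * 2^m) * (x^j * (j.descFactorial m : ℝ) / ((j.factorial : ℝ) * 2^j)) := by
    intro j
    rw [key l j, mul_sum]
    exact Finset.sum_congr rfl fun m _ => by ring
  rw [tsum_congr hterm,
    Summable.tsum_finsetSum (fun m _ => (summable_aux m x).mul_left (Bcoef l m * 2^m))]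
  have hinner : ∀ m ∈ range (l+1),
      (∑' j : ℕ, (Bcoef l m * 2^m) * (x^j * (j.descFactorial m : ℝ) / ((j.factorial : ℝ) * 2^j)))
        = Bcoef l m * x^m * Real.exp (x/2) := by
    intro m _
    rw [tsum_mul_left, tsum_aux]
    have h2 : (2:ℝ)^m * (x/2)^m = x^m := by
      rw [← mul_pow]
      congr 1
      ring
    calc Bcoef l m * 2^m * ((x/2)^m * Real.exp (x/2))
        = Bcoef l m * ((2:ℝ)^m * (x/2)^m) * Real.exp (x/2) := by ring
      _ = Bcoef l m * x^m * Real.exp (x/2) := by rw [h2]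
  rw [Finset.sum_congr rfl hinner]
  rw [← Finset.sum_range_reflect
    (fun j => ((2 * l + 1).factorial : ℝ) /
      (((2 * l + 1 - 2 * j).factorial : ℝ) * (j.factorial : ℝ) * 2 ^ j) * x ^ (l - j)) (l+1)]
  rw [Finset.sum_mul]
  apply Finset.sum_congr rfl
  intro m hm
  have hml : m ≤ l := by
    have := mem_range.1 hm
    omega
  have e1 : l + 1 - 1 - m = l - m := by omega
  have e2 : 2 * l + 1 - 2 * (l - m) = 2 * m + 1 := by omega
  have e3 : l - (l - m) = m := by omega
  simp only [e1, e2, e3]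
  unfold Bcoef
  ring
end

section
/- With I_0, I_l (l ≥ 1) as above, for l ≥ 1 and k ≥ 0 one has ∂I_l/∂t_k = (I_{l+1}/(1−I_1)) · I_0^k/k! + I_0^{k−l}/(k−l)! · H(k−l), where H is the Heaviside step function (H(x)=1 for x ≥ 0, H(x)=0 for x < 0). -/
open MvPowerSeries

noncomputable instance : TopologicalSpace (MvPowerSeries ℕ ℝ) :=
  Pi.topologicalSpace

/-- Formal partial derivative `∂/∂t_k` of a multivariate formal power series. -/
noncomputable def pderivMv (k : ℕ) (f : MvPowerSeries ℕ ℝ) : MvPowerSeries ℕ ℝ :=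
  fun d => ((d k : ℝ) + 1) * MvPowerSeries.coeff (d + Finsupp.single k 1) f

lemma coeff_pderivMv (k : ℕ) (f : MvPowerSeries ℕ ℝ) (d : ℕ →₀ ℕ) :
    MvPowerSeries.coeff d (pderivMv k f)
      = ((d k : ℝ) + 1) * MvPowerSeries.coeff (d + Finsupp.single k 1) f := rfl

instance : T2Space (MvPowerSeries ℕ ℝ) := inferInstanceAs (T2Space ((ℕ →₀ ℕ) → ℝ))
instance : IsTopologicalAddGroup (MvPowerSeries ℕ ℝ) :=
  inferInstanceAs (IsTopologicalAddGroup ((ℕ →₀ ℕ) → ℝ))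

lemma continuous_pderivMv (k : ℕ) : Continuous (pderivMv k) := by
  exact continuous_pi fun d => (continuous_const.mul (continuous_apply (d + Finsupp.single k 1)))

noncomputable def DkL (k : ℕ) : MvPowerSeries ℕ ℝ →L[ℝ] MvPowerSeries ℕ ℝ where
  toFun := pderivMv k
  map_add' f g := by
    funext d
    show ((d k : ℝ) + 1) * MvPowerSeries.coeff (d + Finsupp.single k 1) (f + g) = _
    rw [map_add]
    show _ = MvPowerSeries.coeff d (pderivMv k f) + MvPowerSeries.coeff d (pderivMv k g)
    rw [coeff_pderivMv, coeff_pderivMv]; ring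
  map_smul' c f := by
    funext d
    show ((d k : ℝ) + 1) * MvPowerSeries.coeff (d + Finsupp.single k 1) (c • f) = _
    rw [MvPowerSeries.coeff_smul]
    show _ = MvPowerSeries.coeff d (c • pderivMv k f)
    rw [MvPowerSeries.coeff_smul, coeff_pderivMv]; ring
  cont := continuous_pderivMv k

lemma pderivMv_add (k : ℕ) (f g : MvPowerSeries ℕ ℝ) :
    pderivMv k (f + g) = pderivMv k f + pderivMv k g := (DkL k).map_add f g

lemma pderivMv_smul (k : ℕ) (c : ℝ) (f : MvPowerSeries ℕ ℝ) :
    pderivMv k (c • f) = c • pderivMv k f := (DkL k).map_smul c f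

noncomputable def mulRightL (c : MvPowerSeries ℕ ℝ) :
    MvPowerSeries ℕ ℝ →L[ℝ] MvPowerSeries ℕ ℝ where
  toLinearMap := LinearMap.mulRight ℝ c
  cont := by
    apply continuous_pi
    intro d
    have : (fun f : MvPowerSeries ℕ ℝ => (f * c) d) =
        fun f : MvPowerSeries ℕ ℝ => ∑ p ∈ Finset.HasAntidiagonal.antidiagonal d, f p.1 * c p.2 := by
      funext f; exact MvPowerSeries.coeff_mul d f c
    show Continuous fun f : MvPowerSeries ℕ ℝ => (f * c) d
    rw [this]
    exact continuous_finset_sum _ fun p _ => (continuous_apply p.1).mul continuous_const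

lemma sum_antidiag_swap (F : (ℕ →₀ ℕ) × (ℕ →₀ ℕ) → ℝ) (n : ℕ →₀ ℕ) :
    ∑ q ∈ Finset.HasAntidiagonal.antidiagonal n, F q = ∑ q ∈ Finset.HasAntidiagonal.antidiagonal n, F q.swap := by
  rw [← Finset.HasAntidiagonal.map_swap_antidiagonal, Finset.sum_map]
  simp

set_option maxHeartbeats 1000000 in
lemma leibniz_claim (k : ℕ) (d : ℕ →₀ ℕ) (f g : MvPowerSeries ℕ ℝ) :
    ∑ q ∈ Finset.HasAntidiagonal.antidiagonal (d + (Finsupp.single k 1 : ℕ →₀ ℕ)),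
        (q.1 k : ℝ) * (MvPowerSeries.coeff q.1 f * MvPowerSeries.coeff q.2 g)
      = ∑ p ∈ Finset.HasAntidiagonal.antidiagonal d,
          ((p.1 k : ℝ) + 1) *
            (MvPowerSeries.coeff (p.1 + Finsupp.single k 1) f * MvPowerSeries.coeff p.2 g) := by
  set e := Finsupp.single k 1 with he
  rw [← Finset.sum_filter_of_ne (p := fun q : (ℕ →₀ ℕ) × (ℕ →₀ ℕ) => e ≤ q.1)
      (fun q hq hne => by
        by_contra hle
        have h1 : ¬ (1 : ℕ) ≤ q.1 k := by
          rw [← Finsupp.single_le_iff]; exact hle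
        have h0 : q.1 k = 0 := by omega
        simp [h0] at hne)]
  refine (Finset.sum_nbij' (i := fun p => (p.1 + e, p.2)) (j := fun q => (q.1 - e, q.2))
      ?_ ?_ ?_ ?_ ?_).symm
  · intro p hp
    rw [Finset.mem_filter, Finset.HasAntidiagonal.mem_antidiagonal]
    rw [Finset.HasAntidiagonal.mem_antidiagonal] at hp
    exact ⟨by rw [add_right_comm, hp], le_add_self⟩
  · intro q hq
    rw [Finset.mem_filter, Finset.HasAntidiagonal.mem_antidiagonal] at hq
    rw [Finset.HasAntidiagonal.mem_antidiagonal]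
    obtain ⟨hsum, hle⟩ := hq
    rw [tsub_add_eq_add_tsub hle, hsum, add_tsub_cancel_right]
  · intro p hp
    simp
  · intro q hq
    rw [Finset.mem_filter] at hq
    simp [tsub_add_cancel_of_le hq.2]
  · intro p hp
    have h1 : (p.1 + e) k = p.1 k + 1 := by simp [he]
    rw [h1]
    push_cast
    ring

lemma pderivMv_mul (k : ℕ) (f g : MvPowerSeries ℕ ℝ) :
    pderivMv k (f * g) = pderivMv k f * g + f * pderivMv k g := by
  funext d
  set e := Finsupp.single k 1 with he
  show ((d k : ℝ) + 1) * MvPowerSeries.coeff (d + e) (f * g) = _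
  have hrhs : (pderivMv k f * g + f * pderivMv k g) d
      = MvPowerSeries.coeff d (pderivMv k f * g) + MvPowerSeries.coeff d (f * pderivMv k g) :=
    map_add (MvPowerSeries.coeff d) _ _
  rw [hrhs, MvPowerSeries.coeff_mul, MvPowerSeries.coeff_mul, MvPowerSeries.coeff_mul]
  have key1 := leibniz_claim k d f g
  have key2 : ∑ q ∈ Finset.HasAntidiagonal.antidiagonal (d + e),
        (q.2 k : ℝ) * (MvPowerSeries.coeff q.1 f * MvPowerSeries.coeff q.2 g)
      = ∑ p ∈ Finset.HasAntidiagonal.antidiagonal d,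
          ((p.2 k : ℝ) + 1) *
            (MvPowerSeries.coeff p.1 f * MvPowerSeries.coeff (p.2 + e) g) := by
    have h := leibniz_claim k d g f
    rw [sum_antidiag_swap (fun q =>
      (q.2 k : ℝ) * (MvPowerSeries.coeff q.1 f * MvPowerSeries.coeff q.2 g)) (d + e)]
    rw [sum_antidiag_swap (fun p =>
      ((p.2 k : ℝ) + 1) * (MvPowerSeries.coeff p.1 f * MvPowerSeries.coeff (p.2 + e) g)) d]
    simpa [mul_comm, mul_left_comm] using h
  have hsplit : ((d k : ℝ) + 1) * ∑ q ∈ Finset.HasAntidiagonal.antidiagonal (d + e),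
        MvPowerSeries.coeff q.1 f * MvPowerSeries.coeff q.2 g
      = ∑ q ∈ Finset.HasAntidiagonal.antidiagonal (d + e),
          (q.1 k : ℝ) * (MvPowerSeries.coeff q.1 f * MvPowerSeries.coeff q.2 g)
        + ∑ q ∈ Finset.HasAntidiagonal.antidiagonal (d + e),
          (q.2 k : ℝ) * (MvPowerSeries.coeff q.1 f * MvPowerSeries.coeff q.2 g) := by
    rw [Finset.mul_sum, ← Finset.sum_add_distrib]
    refine Finset.sum_congr rfl fun q hq => ?_
    rw [Finset.HasAntidiagonal.mem_antidiagonal] at hq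
    have hk : q.1 k + q.2 k = d k + 1 := by
      rw [← Finsupp.add_apply, hq]; simp [he]
    have hcast : (q.1 k : ℝ) + (q.2 k : ℝ) = (d k : ℝ) + 1 := by
      exact_mod_cast hk
    rw [← hcast]; ring
  rw [hsplit, key1, key2]
  congr 1
  · refine Finset.sum_congr rfl fun p hp => ?_
    rw [coeff_pderivMv]; ring
  · refine Finset.sum_congr rfl fun p hp => ?_
    rw [coeff_pderivMv]; ring

lemma pderivMv_X (k m : ℕ) :
    pderivMv k (MvPowerSeries.X m : MvPowerSeries ℕ ℝ) = if m = k then 1 else 0 := by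
  funext d
  show ((d k : ℝ) + 1) * MvPowerSeries.coeff (d + Finsupp.single k 1) (MvPowerSeries.X m)
      = (if m = k then (1 : MvPowerSeries ℕ ℝ) else 0) d
  rw [MvPowerSeries.coeff_X]
  by_cases h : m = k
  · subst h
    simp only [if_pos rfl]
    show _ = MvPowerSeries.coeff d 1
    rw [MvPowerSeries.coeff_one]
    by_cases hd : d = 0
    · subst hd; simp
    · rw [if_neg (by simpa using hd), if_neg hd]; ring
  · have hne : d + Finsupp.single k 1 ≠ Finsupp.single m 1 := by
      intro habs
      have h2 := congrFun (congrArg (fun x : ℕ →₀ ℕ => (x : ℕ → ℕ)) habs) k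
      simp [Finsupp.single_apply, h] at h2
    rw [if_neg h, if_neg hne]
    show _ = MvPowerSeries.coeff d 0
    simp

lemma pderivMv_one (k : ℕ) : pderivMv k (1 : MvPowerSeries ℕ ℝ) = 0 := by
  have h := pderivMv_mul k (1 : MvPowerSeries ℕ ℝ) 1
  rw [mul_one, mul_one, one_mul] at h
  exact left_eq_add.mp h

lemma pderivMv_pow (k n : ℕ) (f : MvPowerSeries ℕ ℝ) :
    pderivMv k (f ^ (n + 1)) = ((n : ℝ) + 1) • (f ^ n * pderivMv k f) := by
  induction n with
  | zero => simp [pderivMv]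
  | succ m ih =>
    rw [pow_succ, pderivMv_mul, ih]
    rw [smul_mul_assoc]
    have : f ^ (m + 1) * pderivMv k f = f ^ m * pderivMv k f * f := by
      rw [pow_succ]; ring
    rw [this]
    push_cast
    match_scalars <;> ring

lemma coeff_pow_zero_of_lt {I0 : MvPowerSeries ℕ ℝ}
    (hc : MvPowerSeries.constantCoeff I0 = 0) (n : ℕ) :
    (n : ℕ∞) ≤ (I0 ^ n).order := by
  induction n with
  | zero => simp
  | succ m ih =>
    have h1 : (1 : ℕ∞) ≤ I0.order := by
      apply MvPowerSeries.le_order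
      intro d hd
      have hd0 : d = 0 := by
        rw [← Finsupp.degree_eq_zero_iff]
        have : ((Finsupp.degree d : ℕ) : ℕ∞) < (1 : ℕ) := by exact_mod_cast hd
        exact_mod_cast Nat.lt_one_iff.mp (by exact_mod_cast this)
      subst hd0
      simpa [MvPowerSeries.coeff_zero_eq_constantCoeff] using hc
    rw [pow_succ]
    calc ((m + 1 : ℕ) : ℕ∞) = (m : ℕ∞) + 1 := by push_cast; rfl
      _ ≤ (I0 ^ m).order + I0.order := add_le_add ih h1
      _ ≤ (I0 ^ m * I0).order := MvPowerSeries.le_order_mul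

lemma coeff_X_mul_pow_zero {I0 : MvPowerSeries ℕ ℝ}
    (hc : MvPowerSeries.constantCoeff I0 = 0) (m n : ℕ) {d : ℕ →₀ ℕ}
    (hd : Finsupp.degree d < n) :
    MvPowerSeries.coeff d (MvPowerSeries.X m * I0 ^ n) = 0 := by
  have h1 : (n : ℕ∞) ≤ (MvPowerSeries.X m * I0 ^ n).order :=
    le_trans (coeff_pow_zero_of_lt hc n)
      (le_trans le_add_self MvPowerSeries.le_order_mul)
  exact MvPowerSeries.coeff_of_lt_order
    (lt_of_lt_of_le (by exact_mod_cast hd) h1)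

lemma hasSum_of_eventually_zero (F : ℕ → MvPowerSeries ℕ ℝ)
    (h : ∀ (d : ℕ →₀ ℕ) (n : ℕ), Finsupp.degree d < n → MvPowerSeries.coeff d (F n) = 0) :
    HasSum F (fun d => ∑ n ∈ Finset.range (Finsupp.degree d + 1), MvPowerSeries.coeff d (F n)) := by
  apply Pi.hasSum.mpr
  intro d
  apply hasSum_sum_of_ne_finset_zero
  intro n hn
  rw [Finset.mem_range, not_lt] at hn
  exact h d n (by omega)

lemma DkL_apply (k : ℕ) (f : MvPowerSeries ℕ ℝ) : DkL k f = pderivMv k f := rfl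
lemma mulRightL_apply (c f : MvPowerSeries ℕ ℝ) : mulRightL c f = f * c := rfl

lemma master (I0 : MvPowerSeries ℕ ℝ) (hc : MvPowerSeries.constantCoeff I0 = 0)
    (J J' : MvPowerSeries ℕ ℝ) (l k : ℕ)
    (hJ : J = ∑' n : ℕ, ((n.factorial : ℝ))⁻¹ • (MvPowerSeries.X (n + l) * I0 ^ n))
    (hJ' : J' = ∑' n : ℕ, ((n.factorial : ℝ))⁻¹ • (MvPowerSeries.X (n + (l + 1)) * I0 ^ n)) :
    pderivMv k J = J' * pderivMv k I0
      + if l ≤ k then (((k - l).factorial : ℝ))⁻¹ • I0 ^ (k - l) else 0 := by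
  set F : ℕ → MvPowerSeries ℕ ℝ :=
    fun n => ((n.factorial : ℝ))⁻¹ • (MvPowerSeries.X (n + l) * I0 ^ n) with hF
  set F' : ℕ → MvPowerSeries ℕ ℝ :=
    fun n => ((n.factorial : ℝ))⁻¹ • (MvPowerSeries.X (n + (l + 1)) * I0 ^ n) with hF'
  have hz : ∀ (d : ℕ →₀ ℕ) (n : ℕ), Finsupp.degree d < n →
      MvPowerSeries.coeff d (F n) = 0 := by
    intro d n hd
    rw [hF]
    simp only
    rw [MvPowerSeries.coeff_smul, coeff_X_mul_pow_zero hc _ _ hd, mul_zero]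
  have hz' : ∀ (d : ℕ →₀ ℕ) (n : ℕ), Finsupp.degree d < n →
      MvPowerSeries.coeff d (F' n) = 0 := by
    intro d n hd
    rw [hF']
    simp only
    rw [MvPowerSeries.coeff_smul, coeff_X_mul_pow_zero hc _ _ hd, mul_zero]
  have hSJ : HasSum F J := by
    rw [hJ]; exact (hasSum_of_eventually_zero F hz).summable.hasSum
  have hSJ' : HasSum F' J' := by
    rw [hJ']; exact (hasSum_of_eventually_zero F' hz').summable.hasSum
  have hD : HasSum (fun n => pderivMv k (F n)) (pderivMv k J) := by
    have := (DkL k).hasSum hSJ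
    simpa [DkL_apply] using this
  set G : ℕ → MvPowerSeries ℕ ℝ := fun n =>
    match n with
    | 0 => 0
    | m + 1 => F' m * pderivMv k I0
  set Hv : ℕ → MvPowerSeries ℕ ℝ := fun n =>
    if n + l = k then ((n.factorial : ℝ))⁻¹ • I0 ^ n else 0 with hHvdef
  have hsplit : ∀ n, pderivMv k (F n) = G n + Hv n := by
    intro n
    match n with
    | 0 =>
      show pderivMv k (((Nat.factorial 0 : ℝ))⁻¹ • (MvPowerSeries.X (0 + l) * I0 ^ 0))
        = 0 + (if 0 + l = k then ((Nat.factorial 0 : ℝ))⁻¹ • I0 ^ 0 else 0)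
      rw [pow_zero, mul_one]
      simp only [Nat.factorial_zero, Nat.cast_one, inv_one, one_smul, zero_add]
      rw [pderivMv_X]
    | m + 1 =>
      show pderivMv k (((Nat.factorial (m + 1) : ℝ))⁻¹ •
          (MvPowerSeries.X (m + 1 + l) * I0 ^ (m + 1)))
        = F' m * pderivMv k I0
          + (if m + 1 + l = k then ((Nat.factorial (m + 1) : ℝ))⁻¹ • I0 ^ (m + 1) else 0)
      rw [pderivMv_smul, pderivMv_mul, pderivMv_X, pderivMv_pow, smul_add]
      have harith : ((Nat.factorial (m + 1) : ℝ))⁻¹ * ((m : ℝ) + 1)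
          = ((Nat.factorial m : ℝ))⁻¹ := by
        rw [Nat.factorial_succ]
        have h1 : ((m : ℝ) + 1) ≠ 0 := by positivity
        have h2 : ((Nat.factorial m : ℝ)) ≠ 0 := by
          exact_mod_cast Nat.factorial_ne_zero m
        push_cast
        field_simp
      have hB : ((Nat.factorial (m + 1) : ℝ))⁻¹ •
            (MvPowerSeries.X (m + 1 + l) * (((m : ℝ) + 1) • (I0 ^ m * pderivMv k I0)))
          = F' m * pderivMv k I0 := by
        rw [hF']
        simp only
        rw [mul_smul_comm, smul_smul, harith, smul_mul_assoc]
        rw [show m + 1 + l = m + (l + 1) from by omega, mul_assoc]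
      have hA : ((Nat.factorial (m + 1) : ℝ))⁻¹ •
            ((if m + 1 + l = k then (1 : MvPowerSeries ℕ ℝ) else 0) * I0 ^ (m + 1))
          = (if m + 1 + l = k then ((Nat.factorial (m + 1) : ℝ))⁻¹ • I0 ^ (m + 1) else 0) := by
        split_ifs with h
        · rw [one_mul]
        · rw [zero_mul, smul_zero]
      rw [hA, hB, add_comm]
  have hG : HasSum G (J' * pderivMv k I0) := by
    have h1 : HasSum (fun m => F' m * pderivMv k I0) (J' * pderivMv k I0) := by
      have := (mulRightL (pderivMv k I0)).hasSum hSJ'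
      simpa [mulRightL_apply] using this
    have h2 : HasSum (fun m => G (m + 1)) (J' * pderivMv k I0) := h1
    have h3 := (hasSum_nat_add_iff (f := G) 1).mp h2
    have hG0 : G 0 = 0 := rfl
    simpa [hG0] using h3
  have hHv : HasSum Hv
      (if l ≤ k then (((k - l).factorial : ℝ))⁻¹ • I0 ^ (k - l) else 0) := by
    by_cases hlk : l ≤ k
    · rw [if_pos hlk]
      have heq : Hv = fun n =>
          if n = k - l then (((k - l).factorial : ℝ))⁻¹ • I0 ^ (k - l) else 0 := by
        funext n
        rw [hHvdef]
        simp only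
        by_cases h : n + l = k
        · have hn : n = k - l := by omega
          subst hn
          rw [if_pos h, if_pos rfl]
        · rw [if_neg h, if_neg (by omega)]
      rw [heq]
      exact hasSum_ite_eq _ _
    · rw [if_neg hlk]
      have heq : Hv = fun _ => 0 := by
        funext n
        rw [hHvdef]
        exact if_neg (by omega)
      rw [heq]
      exact hasSum_zero
  have hfinal : HasSum (fun n => pderivMv k (F n))
      (J' * pderivMv k I0
        + if l ≤ k then (((k - l).factorial : ℝ))⁻¹ • I0 ^ (k - l) else 0) := by
    have heq : (fun n => pderivMv k (F n)) = fun n => G n + Hv n := funext hsplit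
    rw [heq]
    exact hG.add hHv
  exact hD.unique hfinal

/-- For `l ≥ 1` and `k ≥ 0`,
`∂I_l/∂t_k = (I_{l+1}/(1−I₁)) I₀^k/k! + I₀^{k−l}/(k−l)! · H(k−l)`,
where the Heaviside term is present exactly when `l ≤ k`. -/
theorem pderiv_Il (I0 : MvPowerSeries ℕ ℝ)
    (hc : MvPowerSeries.constantCoeff I0 = 0)
    (hfix : I0 = ∑' n : ℕ, ((n.factorial : ℝ))⁻¹ • (MvPowerSeries.X n * I0 ^ n))
    (I : ℕ → MvPowerSeries ℕ ℝ)
    (hI : ∀ k, I k = ∑' n : ℕ, ((n.factorial : ℝ))⁻¹ •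
        (MvPowerSeries.X (n + k) * I0 ^ n)) :
    ∀ l k : ℕ, 1 ≤ l →
      pderivMv k (I l)
        = (I (l + 1) * (1 - I 1)⁻¹) * (((k.factorial : ℝ))⁻¹ • I0 ^ k)
          + if l ≤ k then (((k - l).factorial : ℝ))⁻¹ • I0 ^ (k - l) else 0 := by
  intro l k hl
  -- constant coefficient of I 1 is zero
  have hI1c : MvPowerSeries.constantCoeff (I 1) = 0 := by
    set F1 : ℕ → MvPowerSeries ℕ ℝ :=
      fun n => ((n.factorial : ℝ))⁻¹ • (MvPowerSeries.X (n + 1) * I0 ^ n) with hF1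
    have hz1 : ∀ (d : ℕ →₀ ℕ) (n : ℕ), Finsupp.degree d < n →
        MvPowerSeries.coeff d (F1 n) = 0 := by
      intro d n hd
      rw [hF1]
      simp only
      rw [MvPowerSeries.coeff_smul, coeff_X_mul_pow_zero hc _ _ hd, mul_zero]
    have hS1 : HasSum F1 (I 1) := by
      rw [hI 1]; exact (hasSum_of_eventually_zero F1 hz1).summable.hasSum
    have hS0 : HasSum (fun n => F1 n 0) ((I 1) 0) := Pi.hasSum.mp hS1 0
    have hzero : (fun n => F1 n (0 : ℕ →₀ ℕ)) = fun _ => (0 : ℝ) := by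
      funext n
      show MvPowerSeries.coeff 0 (F1 n) = 0
      rw [hF1]
      simp only
      rw [MvPowerSeries.coeff_smul, MvPowerSeries.coeff_zero_eq_constantCoeff, map_mul,
        MvPowerSeries.constantCoeff_X, zero_mul, mul_zero]
    rw [hzero] at hS0
    have := hasSum_zero.unique hS0
    exact this.symm
  have hcc : MvPowerSeries.constantCoeff (1 - I 1) ≠ 0 := by
    rw [map_sub, map_one, hI1c, sub_zero]
    exact one_ne_zero
  -- the fixed point equation for I0
  have h0 := master I0 hc I0 (I 1) 0 k (by simpa using hfix) (by simpa using hI 1)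
  simp only [Nat.zero_le, if_pos, Nat.sub_zero] at h0
  have hsub : (1 - I 1) * pderivMv k I0 = ((k.factorial : ℝ))⁻¹ • I0 ^ k := by
    rw [sub_mul, one_mul]
    exact sub_eq_of_eq_add' h0
  have hinv : (1 - I 1)⁻¹ * (1 - I 1) = 1 := MvPowerSeries.inv_mul_cancel _ hcc
  have hDI0 : pderivMv k I0 = (1 - I 1)⁻¹ * (((k.factorial : ℝ))⁻¹ • I0 ^ k) := by
    calc pderivMv k I0 = ((1 - I 1)⁻¹ * (1 - I 1)) * pderivMv k I0 := by
          rw [hinv, one_mul]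
      _ = (1 - I 1)⁻¹ * ((1 - I 1) * pderivMv k I0) := by rw [mul_assoc]
      _ = (1 - I 1)⁻¹ * (((k.factorial : ℝ))⁻¹ • I0 ^ k) := by rw [hsub]
  have h := master I0 hc (I l) (I (l + 1)) l k (hI l) (hI (l + 1))
  rw [h, hDI0, mul_assoc]
end
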